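/- arXiv:math/9604212 — 2 statements merged into one kernel-verified Lean document; each statement's English description precedes it below -/
import Mathlib

section
/- Let X be a real Banach space. The following are equivalent: (1) X is weakly sequentially complete, i.e., for every sequence (x_n) in X such that (x*(x_n)) converges in ℝ for every x* ∈ X* there exists x ∈ X with x*(x_n) → x*(x) for all x* ∈ X*; (2) every sequence (f_n) in L₀(X) such that (x*∘f_n) is a Cauchy sequence in the L_∞(μ)-norm for every x* ∈ X* converges scalarly in L_∞ to some f ∈ L₀(X). -/
open MeasureTheory Filter Topology ENNReal Set

noncomputable section

/-- Lebesgue measure on `[0,1]`, as a measure on `ℝ`. -/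
def μ01 : Measure ℝ := volume.restrict (Set.Icc 0 1)

section Defs
variable {X : Type*} [NormedAddCommGroup X] [NormedSpace ℝ X]

/-- `(f n)` converges to `g` scalarly in measure. -/
def ScalarInMeasure (f : ℕ → ℝ → X) (g : ℝ → X) : Prop :=
  ∀ φ : X →L[ℝ] ℝ,
    TendstoInMeasure μ01 (fun n ω => φ (f n ω)) atTop (fun ω => φ (g ω))

/-- `(f n)` converges to `g` scalarly almost everywhere. -/
def ScalarAE (f : ℕ → ℝ → X) (g : ℝ → X) : Prop :=
  ∀ φ : X →L[ℝ] ℝ, ∀ᵐ ω ∂μ01,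
    Tendsto (fun n => φ (f n ω)) atTop (𝓝 (φ (g ω)))

/-- `(f n)` converges to `g` weakly almost everywhere. -/
def WeaklyAE (f : ℕ → ℝ → X) (g : ℝ → X) : Prop :=
  ∃ A : Set ℝ, MeasurableSet A ∧ μ01 A = 1 ∧
    ∀ ω ∈ A, ∀ φ : X →L[ℝ] ℝ,
      Tendsto (fun n => φ (f n ω)) atTop (𝓝 (φ (g ω)))

/-- `(f n)` converges to `g` scalarly in `L_p`. -/
def ScalarInLp (p : ℝ≥0∞) (f : ℕ → ℝ → X) (g : ℝ → X) : Prop :=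
  ∀ φ : X →L[ℝ] ℝ,
    Tendsto (fun n => eLpNorm (fun ω => φ (f n ω) - φ (g ω)) p μ01) atTop (𝓝 0)

/-- `(f n)` is bounded in `L_p(X)`. -/
def LpBounded (p : ℝ≥0∞) (f : ℕ → ℝ → X) : Prop :=
  ∃ C : ℝ≥0∞, C < ⊤ ∧ ∀ n, eLpNorm (f n) p μ01 ≤ C

/-- `(f n)` is pointwise bounded almost everywhere. -/
def PtwiseBddAE (f : ℕ → ℝ → X) : Prop :=
  ∀ᵐ ω ∂μ01, BddAbove (Set.range fun n => ‖f n ω‖)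

/-- `(f n)` is scalarly Cauchy in measure. -/
def ScalarCauchyInMeasure (f : ℕ → ℝ → X) : Prop :=
  ∀ φ : X →L[ℝ] ℝ, ∀ ε : ℝ, 0 < ε → ∃ N : ℕ, ∀ n ≥ N, ∀ m ≥ N,
    μ01 {ω | ε ≤ |φ (f n ω) - φ (f m ω)|} < ENNReal.ofReal ε

/-- The `q`-Pettis norm of a function (possibly infinite). -/
def pettisNorm (q : ℝ≥0∞) (f : ℝ → X) : ℝ≥0∞ :=
  ⨆ (φ : X →L[ℝ] ℝ) (_ : ‖φ‖ ≤ 1), eLpNorm (fun ω => φ (f ω)) q μ01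

end Defs

/-- `X` is an Asplund space: every closed separable subspace has separable dual. -/
def AsplundCond (X : Type*) [NormedAddCommGroup X] [NormedSpace ℝ X] : Prop :=
  ∀ Y : Submodule ℝ X, IsClosed (Y : Set X) →
    TopologicalSpace.SeparableSpace Y →
    TopologicalSpace.SeparableSpace (StrongDual ℝ Y)

namespace Stmt17Aux

open Metric

lemma ofReal_norm_eq_coe_nnnorm {E : Type*} [SeminormedAddGroup E] (a : E) :
    ENNReal.ofReal ‖a‖ = (‖a‖₊ : ℝ≥0∞) := ofReal_norm a

lemma μ01_le (s : Set ℝ) : μ01 s ≤ volume s := Measure.le_iff'.1 Measure.restrict_le_self s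

lemma μ01_null_of_volume_null {s : Set ℝ} (h : volume s = 0) : μ01 s = 0 :=
  le_antisymm ((μ01_le s).trans h.le) zero_le

lemma μ01_univ : μ01 univ = 1 := by
  simp [μ01, Real.volume_Icc]

lemma μ01_ne_zero : μ01 ≠ 0 := by
  intro h
  have h2 := μ01_univ
  rw [h] at h2
  simp at h2

instance : IsFiniteMeasure μ01 := by
  constructor
  rw [μ01_univ]
  exact one_lt_top

lemma exists_conull {α : Type*} [MeasurableSpace α] {μ : Measure α} {p : α → Prop}
    (h : ∀ᵐ ω ∂μ, p ω) :
    ∃ B : Set α, MeasurableSet B ∧ μ Bᶜ = 0 ∧ ∀ ω ∈ B, p ω := by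
  refine ⟨(toMeasurable μ {ω | ¬ p ω})ᶜ, (measurableSet_toMeasurable _ _).compl, ?_, ?_⟩
  · rw [compl_compl, measure_toMeasurable]
    exact h
  · intro ω hω
    by_contra hp
    exact hω (subset_toMeasurable _ _ hp)

lemma conull_nonempty {p : ℝ → Prop} (h : ∀ᵐ ω ∂μ01, p ω) : ∃ ω, p ω := by
  by_contra hne
  push_neg at hne
  have : μ01 univ = 0 := by
    have h2 : {ω : ℝ | ¬ p ω} = univ := by
      ext ω; simpa using hne ω
    have := (ae_iff.1 h)
    rwa [h2] at this
  rw [μ01_univ] at this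
  simp at this

lemma exists_ofReal_le {ε : ℝ≥0∞} (hε : 0 < ε) : ∃ r : ℝ, 0 < r ∧ ENNReal.ofReal r ≤ ε := by
  rcases eq_or_ne ε ⊤ with rfl | hne
  · exact ⟨1, one_pos, le_top⟩
  · have htp : 0 < ε.toReal := ENNReal.toReal_pos hε.ne' hne
    refine ⟨ε.toReal / 2, by positivity, ?_⟩
    calc ENNReal.ofReal (ε.toReal / 2) ≤ ENNReal.ofReal ε.toReal := by
          apply ENNReal.ofReal_le_ofReal; linarith
      _ = ε := ENNReal.ofReal_toReal hne

lemma ae_abs_le_of_eLpNorm_top_le {α : Type*} [MeasurableSpace α] {μ : Measure α}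
    {u : α → ℝ} {c : ℝ} (hc : 0 ≤ c)
    (h : eLpNorm u ⊤ μ ≤ ENNReal.ofReal c) : ∀ᵐ ω ∂μ, |u ω| ≤ c := by
  rw [eLpNorm_exponent_top] at h
  filter_upwards [ae_le_eLpNormEssSup (f := u) (μ := μ)] with ω hω
  have h2 : (‖u ω‖₊ : ℝ≥0∞) ≤ ENNReal.ofReal c := le_trans hω h
  rw [← ofReal_norm_eq_coe_nnnorm] at h2
  rwa [ENNReal.ofReal_le_ofReal_iff hc, Real.norm_eq_abs] at h2

lemma eLpNorm_top_le_of_ae_abs_le {α : Type*} [MeasurableSpace α] {μ : Measure α}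
    {u : α → ℝ} {c : ℝ} (h : ∀ᵐ ω ∂μ, |u ω| ≤ c) :
    eLpNorm u ⊤ μ ≤ ENNReal.ofReal c := by
  rw [eLpNorm_exponent_top]
  refine essSup_le_of_ae_le _ ?_
  filter_upwards [h] with ω hω
  rw [← ofReal_norm, Real.norm_eq_abs]
  exact ENNReal.ofReal_le_ofReal hω

section NormedX
variable {X : Type*} [NormedAddCommGroup X] [NormedSpace ℝ X]

lemma exists_norming {s : Set X} (hs : TopologicalSpace.IsSeparable s) :
    ∃ Φ : ℕ → (X →L[ℝ] ℝ), (∀ j, ‖Φ j‖ ≤ 1) ∧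
      ∀ y ∈ closure s, ∀ ε : ℝ, 0 < ε → ∃ j, ‖y‖ ≤ Φ j y + ε := by
  obtain ⟨c, hc, hsc⟩ := hs
  obtain ⟨t, ht⟩ : ∃ t : ℕ → X, insert 0 c = range t :=
    Set.Countable.exists_eq_range (hc.insert 0) (insert_nonempty _ _)
  choose Φ hΦ1 hΦ2 using fun j => exists_dual_vector'' ℝ (t j)
  refine ⟨Φ, hΦ1, ?_⟩
  intro y hy ε hε
  have hyt : y ∈ closure (range t) := by
    rw [← ht]
    have h1 : closure s ⊆ closure (closure c) := closure_mono hsc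
    rw [closure_closure] at h1
    exact closure_mono (subset_insert _ _) (h1 hy)
  obtain ⟨z, ⟨j, rfl⟩, hz⟩ := Metric.mem_closure_iff.1 hyt (ε/2) (by linarith)
  refine ⟨j, ?_⟩
  have h1 : |Φ j (y - t j)| ≤ ‖y - t j‖ := by
    calc |Φ j (y - t j)| ≤ ‖Φ j‖ * ‖y - t j‖ := (Φ j).le_opNorm _
    _ ≤ 1 * ‖y - t j‖ := by gcongr; exact hΦ1 j
    _ = ‖y - t j‖ := one_mul _
  have hΦ2' : Φ j (t j) = ‖t j‖ := by exact_mod_cast hΦ2 j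
  have h2 : Φ j y = ‖t j‖ + Φ j (y - t j) := by
    rw [← hΦ2', map_sub]; ring
  have h3 : ‖y - t j‖ < ε/2 := by rwa [← dist_eq_norm]
  have h4 : ‖y‖ - ε/2 ≤ ‖t j‖ := by
    have := norm_sub_norm_le y (t j)
    rw [← dist_eq_norm] at *
    linarith [dist_comm y (t j) ▸ hz]
  rw [h2]
  have := abs_le.1 h1
  linarith

lemma norming_iSup {s : Set X} {Φ : ℕ → (X →L[ℝ] ℝ)} (hΦ1 : ∀ j, ‖Φ j‖ ≤ 1)
    (hΦ : ∀ y ∈ closure s, ∀ ε : ℝ, 0 < ε → ∃ j, ‖y‖ ≤ Φ j y + ε)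
    {y : X} (hy : y ∈ closure s) :
    (‖y‖₊ : ℝ≥0∞) = ⨆ j, (‖Φ j y‖₊ : ℝ≥0∞) := by
  apply le_antisymm
  · refine ENNReal.le_of_forall_pos_le_add fun ε hε h2 => ?_
    obtain ⟨j, hj⟩ := hΦ y hy ε (by exact_mod_cast hε)
    calc (‖y‖₊ : ℝ≥0∞) = ENNReal.ofReal ‖y‖ := (ofReal_norm_eq_coe_nnnorm y).symm
      _ ≤ ENNReal.ofReal (|Φ j y| + ε) := by
          apply ENNReal.ofReal_le_ofReal
          have : Φ j y ≤ |Φ j y| := le_abs_self _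
          linarith
      _ ≤ ENNReal.ofReal ‖Φ j y‖ + ENNReal.ofReal ε := by
          rw [Real.norm_eq_abs]; exact ENNReal.ofReal_add_le
      _ ≤ (⨆ k, (‖Φ k y‖₊ : ℝ≥0∞)) + ε := by
          gcongr
          · rw [ofReal_norm_eq_coe_nnnorm]; exact le_iSup (fun k => (‖Φ k y‖₊ : ℝ≥0∞)) j
          · exact ENNReal.ofReal_coe_nnreal.le
  · refine iSup_le fun j => ?_
    rw [← ofReal_norm_eq_coe_nnnorm, ← ofReal_norm_eq_coe_nnnorm]
    apply ENNReal.ofReal_le_ofReal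
    calc ‖Φ j y‖ ≤ ‖Φ j‖ * ‖y‖ := (Φ j).le_opNorm y
      _ ≤ 1 * ‖y‖ := by gcongr; exact hΦ1 j
      _ = ‖y‖ := one_mul _

lemma norming_eq_zero {s : Set X} {Φ : ℕ → (X →L[ℝ] ℝ)}
    (hΦ : ∀ y ∈ closure s, ∀ ε : ℝ, 0 < ε → ∃ j, ‖y‖ ≤ Φ j y + ε)
    {y : X} (hy : y ∈ closure s) (h0 : ∀ j, Φ j y = 0) : y = 0 := by
  rw [← norm_le_zero_iff]
  refine le_of_forall_pos_le_add fun ε hε => ?_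
  obtain ⟨j, hj⟩ := hΦ y hy ε hε
  rw [h0 j] at hj
  linarith

-- goodset


lemma exists_goodset {d : ℝ → X} (hd : StronglyMeasurable d) :
    ∃ A : Set ℝ, MeasurableSet A ∧ μ01 Aᶜ = 0 ∧
      ∀ ω ∈ A, ∀ (φ : X →L[ℝ] ℝ) (c : ℝ), 0 ≤ c →
        (∀ᵐ ω' ∂μ01, |φ (d ω')| ≤ c) → |φ (d ω)| ≤ c := by
  classical
  set s : ℕ → Set ℝ := fun R => Icc (0:ℝ) 1 ∩ {ω | ‖d ω‖ ≤ (R:ℝ)} with hs_def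
  have hmeas : ∀ R, MeasurableSet (s R) := by
    intro R
    exact measurableSet_Icc.inter (hd.norm.measurable measurableSet_Iic)
  set D : ℕ → ℝ → X := fun R => (s R).indicator d with hD_def
  have hDsm : ∀ R, StronglyMeasurable (D R) := fun R => hd.indicator (hmeas R)
  have hDint : ∀ R, Integrable (D R) volume := by
    intro R
    have hb : ∀ ω, ‖D R ω‖ ≤ (s R).indicator (fun _ => (R:ℝ)) ω := by
      intro ω
      by_cases hω : ω ∈ s R
      · simp only [hD_def, indicator_of_mem hω]
        exact hω.2
      · simp [hD_def, indicator_of_notMem hω]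
    refine Integrable.mono' ?_ (hDsm R).aestronglyMeasurable (ae_of_all _ hb)
    rw [integrable_indicator_iff (hmeas R)]
    refine integrableOn_const (ne_of_lt ?_)
    calc volume (s R) ≤ volume (Icc (0:ℝ) 1) := measure_mono inter_subset_left
      _ < ⊤ := by simp [Real.volume_Icc]
  have hLeb : ∀ᵐ ω ∂(volume : Measure ℝ), ∀ R : ℕ,
      Tendsto (fun r => ⨍ y in closedBall ω r, ‖D R y - D R ω‖ ∂volume) (𝓝[>] 0) (𝓝 0) := by
    rw [ae_all_iff]
    intro R
    filter_upwards [IsUnifLocDoublingMeasure.ae_tendsto_average_norm_sub (μ := (volume : Measure ℝ))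
      ((hDint R).locallyIntegrable) 1] with ω h
    have h2 : ∀ᶠ r in 𝓝[>] (0:ℝ), ω ∈ closedBall ω (1 * r) := by
      filter_upwards [self_mem_nhdsWithin] with r hr
      simp only [mem_closedBall, dist_self, one_mul]
      exact le_of_lt hr
    exact h (fun _ : ℝ => ω) id tendsto_id h2
  obtain ⟨T, hTmeas, hTnull, hT⟩ := exists_conull hLeb
  refine ⟨Ioo 0 1 ∩ T, measurableSet_Ioo.inter hTmeas, ?_, ?_⟩
  · rw [compl_inter]
    refine measure_union_null ?_ (μ01_null_of_volume_null hTnull)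
    have h1 : μ01 (Ioo (0:ℝ) 1)ᶜ = volume ((Ioo (0:ℝ) 1)ᶜ ∩ Icc 0 1) :=
      Measure.restrict_apply measurableSet_Ioo.compl
    rw [h1]
    refine measure_mono_null (fun x hx => ?_) (?_ : volume ({0,1} : Set ℝ) = 0)
    · rcases hx with ⟨hx1, hx2⟩
      simp only [mem_compl_iff, mem_Ioo, not_and_or, not_lt] at hx1
      rcases hx1 with h | h
      · left; exact le_antisymm h hx2.1
      · right; exact le_antisymm hx2.2 h
    · exact (Set.toFinite ({0,1} : Set ℝ)).measure_zero _
  · rintro ω ⟨hωI, hωT⟩ φ c hc hb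
    set R : ℕ := ⌈‖d ω‖⌉₊ with hR
    have hωs : ω ∈ s R := by
      refine ⟨Ioo_subset_Icc_self hωI, ?_⟩
      simp only [mem_setOf_eq, hR]
      exact Nat.le_ceil _
    have hDω : D R ω = d ω := indicator_of_mem hωs d
    have hb' : ∀ᵐ y ∂(volume : Measure ℝ), |φ (D R y)| ≤ c := by
      have h1 : ∀ᵐ y ∂(volume : Measure ℝ), y ∈ Icc (0:ℝ) 1 → |φ (d y)| ≤ c :=
        (ae_restrict_iff' measurableSet_Icc).1 hb
      filter_upwards [h1] with y hy
      by_cases hys : y ∈ s R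
      · rw [hD_def]; simp only [indicator_of_mem hys]
        exact hy hys.1
      · rw [hD_def]; simp only [indicator_of_notMem hys]
        simpa using hc
    have key : ∀ r : ℝ, 0 < r →
        |φ (d ω)| ≤ c + ‖φ‖ * ⨍ y in closedBall ω r, ‖D R y - D R ω‖ ∂volume := by
      intro r hr
      set B := closedBall ω r
      have hBmeas : volume B < ⊤ := measure_closedBall_lt_top
      have hBpos : 0 < volume B := measure_closedBall_pos _ _ hr
      set m : ℝ := (volume B).toReal with hm_def
      have hm : 0 < m := ENNReal.toReal_pos hBpos.ne' hBmeas.ne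
      have hint1 : IntegrableOn (fun y => φ (D R y)) B volume :=
        (φ.integrable_comp (hDint R)).integrableOn
      have hint2 : IntegrableOn (fun _ : ℝ => φ (D R ω)) B volume :=
        integrableOn_const hBmeas.ne
      have hint3 : IntegrableOn (fun y => ‖D R y - D R ω‖) B volume :=
        (((hDint R).integrableOn).sub (integrableOn_const hBmeas.ne)).norm
      -- I bound
      have hI : |∫ y in B, φ (D R y) ∂volume| ≤ c * m := by
        rw [← Real.norm_eq_abs]
        exact norm_setIntegral_le_of_norm_le_const_ae hBmeas
          (ae_restrict_of_ae (hb'.mono fun y hy => by simpa [Real.norm_eq_abs] using hy))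
      have hsub : |∫ y in B, (φ (D R ω) - φ (D R y)) ∂volume|
          ≤ ‖φ‖ * ∫ y in B, ‖D R y - D R ω‖ ∂volume := by
        rw [← Real.norm_eq_abs]
        calc ‖∫ y in B, (φ (D R ω) - φ (D R y)) ∂volume‖
            ≤ ∫ y in B, ‖φ (D R ω) - φ (D R y)‖ ∂volume := norm_integral_le_integral_norm _
          _ ≤ ∫ y in B, ‖φ‖ * ‖D R y - D R ω‖ ∂volume := by
              refine integral_mono_of_nonneg (ae_of_all _ fun y => norm_nonneg _)
                (hint3.const_mul _) (ae_of_all _ fun y => ?_)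
              calc ‖φ (D R ω) - φ (D R y)‖ = ‖φ (D R ω - D R y)‖ := by rw [map_sub]
                _ ≤ ‖φ‖ * ‖D R ω - D R y‖ := φ.le_opNorm _
                _ = ‖φ‖ * ‖D R y - D R ω‖ := by rw [norm_sub_rev]
          _ = ‖φ‖ * ∫ y in B, ‖D R y - D R ω‖ ∂volume := integral_const_mul _ _
      have hconst : ∫ y in B, (φ (D R ω)) ∂volume = m * φ (D R ω) := by
        rw [setIntegral_const, smul_eq_mul]; rfl
      have hsplit : ∫ y in B, (φ (D R ω) - φ (D R y)) ∂volume
          = m * φ (D R ω) - ∫ y in B, φ (D R y) ∂volume := by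
        rw [integral_sub hint2 hint1, hconst]
      have hmain : m * |φ (d ω)| ≤ ‖φ‖ * (∫ y in B, ‖D R y - D R ω‖ ∂volume) + c * m := by
        rw [← hDω]
        calc m * |φ (D R ω)| = |m * φ (D R ω)| := by
              rw [abs_mul, abs_of_pos hm]
          _ = |(∫ y in B, (φ (D R ω) - φ (D R y)) ∂volume) + ∫ y in B, φ (D R y) ∂volume| := by
              rw [hsplit]; ring_nf
          _ ≤ |∫ y in B, (φ (D R ω) - φ (D R y)) ∂volume| + |∫ y in B, φ (D R y) ∂volume| :=
              abs_add_le _ _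
          _ ≤ ‖φ‖ * (∫ y in B, ‖D R y - D R ω‖ ∂volume) + c * m := add_le_add hsub hI
      have havg : (⨍ y in B, ‖D R y - D R ω‖ ∂volume) = m⁻¹ * ∫ y in B, ‖D R y - D R ω‖ ∂volume := by
        rw [setAverage_eq, smul_eq_mul, hm_def]; rfl
      have hJnn : 0 ≤ ∫ y in B, ‖D R y - D R ω‖ ∂volume :=
        integral_nonneg fun y => norm_nonneg _
      rw [havg]
      rw [← mul_le_mul_iff_right₀ hm]
      calc m * |φ (d ω)| ≤ ‖φ‖ * (∫ y in B, ‖D R y - D R ω‖ ∂volume) + c * m := hmain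
        _ = m * (c + ‖φ‖ * (m⁻¹ * ∫ y in B, ‖D R y - D R ω‖ ∂volume)) := by
            field_simp
            ring
    have hlim := hT ω hωT R
    have htends : Tendsto (fun r => c + ‖φ‖ * ⨍ y in closedBall ω r, ‖D R y - D R ω‖ ∂volume)
        (𝓝[>] (0:ℝ)) (𝓝 (c + ‖φ‖ * 0)) :=
      tendsto_const_nhds.add (hlim.const_mul _)
    have hfin := ge_of_tendsto htends
      (eventually_nhdsWithin_of_forall fun r hr => key r hr)
    simpa using hfin


lemma dir2 [CompleteSpace X]
    (hRHS : ∀ f : ℕ → ℝ → X, (∀ n, AEStronglyMeasurable (f n) μ01) →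
      (∀ φ : X →L[ℝ] ℝ, ∀ ε : ℝ, 0 < ε → ∃ N : ℕ, ∀ n ≥ N, ∀ m ≥ N,
        eLpNorm (fun ω => φ (f n ω) - φ (f m ω)) ⊤ μ01 < ENNReal.ofReal ε) →
      ∃ g : ℝ → X, AEStronglyMeasurable g μ01 ∧ ScalarInLp ⊤ f g)
    (x : ℕ → X) (hx : ∀ φ : X →L[ℝ] ℝ, ∃ L : ℝ, Tendsto (fun n => φ (x n)) atTop (𝓝 L)) :
    ∃ y : X, ∀ φ : X →L[ℝ] ℝ, Tendsto (fun n => φ (x n)) atTop (𝓝 (φ y)) := by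
  classical
  choose L hLx using hx
  -- apply RHS to the constant functions
  have hC : ∀ φ : X →L[ℝ] ℝ, ∀ ε : ℝ, 0 < ε → ∃ N : ℕ, ∀ n ≥ N, ∀ m ≥ N,
      eLpNorm (fun ω : ℝ => φ (x n) - φ (x m)) ⊤ μ01 < ENNReal.ofReal ε := by
    intro φ ε hε
    have hcau : CauchySeq (fun n => φ (x n)) := (hLx φ).cauchySeq
    obtain ⟨N, hN⟩ := Metric.cauchySeq_iff.1 hcau ε hε
    refine ⟨N, fun n hn m hm => ?_⟩
    have hval : eLpNorm (fun _ : ℝ => φ (x n) - φ (x m)) ⊤ μ01 = (‖φ (x n) - φ (x m)‖₊ : ℝ≥0∞) := by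
      rw [eLpNorm_exponent_top, eLpNormEssSup_const _ μ01_ne_zero]; rfl
    rw [hval, ← ofReal_norm_eq_coe_nnnorm]
    rw [ENNReal.ofReal_lt_ofReal_iff hε]
    have := hN n hn m hm
    rwa [Real.dist_eq] at this
  obtain ⟨g, hg, hconv⟩ := hRHS (fun n _ => x n) (fun n => aestronglyMeasurable_const) hC
  -- separable closed span of the range of a strongly measurable version of g
  set g' : ℝ → X := hg.mk g with hg'_def
  have hg'sm : StronglyMeasurable g' := hg.stronglyMeasurable_mk
  have hae1 : g =ᵐ[μ01] g' := hg.ae_eq_mk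
  set W : Submodule ℝ X := (Submodule.span ℝ (range g')).topologicalClosure with hW_def
  have hWclosure : (W : Set X) = closure ((Submodule.span ℝ (range g') : Submodule ℝ X) : Set X) :=
    Submodule.topologicalClosure_coe _
  obtain ⟨Φ, hΦ1, hΦn⟩ := exists_norming (hg'sm.isSeparable_range.span (R := ℝ))
  have hrange : ∀ ω, g' ω ∈ (W : Set X) := by
    intro ω
    rw [hWclosure]
    exact subset_closure (Submodule.subset_span ⟨ω, rfl⟩)
  -- each functional is a.e. constant on g
  have hconst : ∀ φ : X →L[ℝ] ℝ, ∀ᵐ ω ∂μ01, φ (g ω) = L φ := by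
    intro φ
    have h1 : ∀ k : ℕ, ∃ n, eLpNorm (fun ω => φ (x n) - φ (g ω)) ⊤ μ01 ≤ ENNReal.ofReal (1/(k+1))
        ∧ |φ (x n) - L φ| ≤ 1/(k+1) := by
      intro k
      have hk : (0:ℝ) < 1/(k+1) := by positivity
      have e1 : ∀ᶠ n in atTop, eLpNorm (fun ω => φ (x n) - φ (g ω)) ⊤ μ01 ≤ ENNReal.ofReal (1/(k+1)) := by
        have := ENNReal.tendsto_nhds_zero.1 (hconv φ) (ENNReal.ofReal (1/(k+1)))
          (by simpa using hk)
        exact this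
      have e2 : ∀ᶠ n in atTop, |φ (x n) - L φ| ≤ 1/(k+1) := by
        have := Metric.tendsto_atTop.1 (hLx φ) (1/(k+1)) hk
        obtain ⟨N, hN⟩ := this
        filter_upwards [eventually_ge_atTop N] with n hn
        have := hN n hn
        rw [Real.dist_eq] at this
        exact this.le
      exact (e1.and e2).exists
    choose nk hnk1 hnk2 using h1
    have h2 : ∀ᵐ ω ∂μ01, ∀ k : ℕ, |φ (x (nk k)) - φ (g ω)| ≤ 1/(k+1) := by
      rw [ae_all_iff]
      intro k
      exact ae_abs_le_of_eLpNorm_top_le (by positivity) (hnk1 k)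
    filter_upwards [h2] with ω hω
    have h3 : ∀ k : ℕ, |φ (g ω) - L φ| ≤ 2/(k+1) := by
      intro k
      have := hω k
      have := hnk2 k
      have habs : |φ (g ω) - L φ| ≤ |φ (x (nk k)) - φ (g ω)| + |φ (x (nk k)) - L φ| := by
        rw [abs_sub_comm (φ (x (nk k))) (φ (g ω))] at *
        calc |φ (g ω) - L φ| = |(φ (g ω) - φ (x (nk k))) + (φ (x (nk k)) - L φ)| := by ring_nf
          _ ≤ |φ (g ω) - φ (x (nk k))| + |φ (x (nk k)) - L φ| := abs_add_le _ _
      calc |φ (g ω) - L φ| ≤ |φ (x (nk k)) - φ (g ω)| + |φ (x (nk k)) - L φ| := by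
            rw [abs_sub_comm (φ (x (nk k))) (φ (g ω))] at habs ⊢; exact habs
        _ ≤ 1/(k+1) + 1/(k+1) := add_le_add (hω k) (hnk2 k)
        _ = 2/(k+1) := by ring
    have h4 : Tendsto (fun k : ℕ => 2/((k:ℝ)+1)) atTop (𝓝 0) := by
      have := tendsto_one_div_add_atTop_nhds_zero_nat (𝕜 := ℝ)
      have h5 : (fun k : ℕ => 2/((k:ℝ)+1)) = (fun k : ℕ => 2 * (1/((k:ℝ)+1))) := by
        funext k; ring
      rw [h5]
      simpa using this.const_mul (2:ℝ)
    have h6 : |φ (g ω) - L φ| ≤ 0 := ge_of_tendsto h4 (Eventually.of_forall h3)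
    have := abs_nonneg (φ (g ω) - L φ)
    have : |φ (g ω) - L φ| = 0 := le_antisymm h6 this
    rw [abs_eq_zero] at this
    linarith [this]
  -- master conull set
  have hmaster : ∀ᵐ ω ∂μ01, g ω = g' ω ∧ ∀ j, Φ j (g ω) = L (Φ j) := by
    refine hae1.and ?_
    rw [ae_all_iff]
    exact fun j => hconst (Φ j)
  obtain ⟨ω₀, hω₀⟩ := conull_nonempty hmaster
  refine ⟨g' ω₀, fun φ => ?_⟩
  -- it suffices to identify φ (g' ω₀) with L φ
  suffices hid : φ (g' ω₀) = L φ by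
    rw [hid]
    exact hLx φ
  obtain ⟨ω₁, hω₁, hφω₁⟩ := conull_nonempty (hmaster.and (hconst φ))
  have heq : g' ω₀ = g' ω₁ := by
    have hmem : g' ω₀ - g' ω₁ ∈ (W : Set X) := W.sub_mem (hrange ω₀) (hrange ω₁)
    rw [hWclosure] at hmem
    have h0 : ∀ j, Φ j (g' ω₀ - g' ω₁) = 0 := by
      intro j
      rw [map_sub]
      have e0 : Φ j (g' ω₀) = L (Φ j) := by rw [← hω₀.1]; exact hω₀.2 j
      have e1 : Φ j (g' ω₁) = L (Φ j) := by rw [← hω₁.1]; exact hω₁.2 j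
      rw [e0, e1, sub_self]
    have := norming_eq_zero hΦn hmem h0
    exact sub_eq_zero.1 this
  rw [heq, ← hω₁.1]
  exact hφω₁


lemma dir1 [CompleteSpace X]
    (hWSC : ∀ x : ℕ → X,
      (∀ φ : X →L[ℝ] ℝ, ∃ L : ℝ, Tendsto (fun n => φ (x n)) atTop (𝓝 L)) →
      ∃ y : X, ∀ φ : X →L[ℝ] ℝ, Tendsto (fun n => φ (x n)) atTop (𝓝 (φ y)))
    (f : ℕ → ℝ → X) (hmeas : ∀ n, AEStronglyMeasurable (f n) μ01)
    (hCauchy : ∀ φ : X →L[ℝ] ℝ, ∀ ε : ℝ, 0 < ε → ∃ N : ℕ, ∀ n ≥ N, ∀ m ≥ N,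
        eLpNorm (fun ω => φ (f n ω) - φ (f m ω)) ⊤ μ01 < ENNReal.ofReal ε) :
    ∃ g : ℝ → X, AEStronglyMeasurable g μ01 ∧ ScalarInLp ⊤ f g := by
  classical
  set f' : ℕ → ℝ → X := fun n => (hmeas n).mk (f n) with hf'_def
  have hsm : ∀ n, StronglyMeasurable (f' n) := fun n => (hmeas n).stronglyMeasurable_mk
  have hae : ∀ n, f n =ᵐ[μ01] f' n := fun n => (hmeas n).ae_eq_mk
  have hcongr : ∀ (φ : X →L[ℝ] ℝ) (n m : ℕ),
      (fun ω => φ (f n ω) - φ (f m ω)) =ᵐ[μ01] (fun ω => φ (f' n ω) - φ (f' m ω)) := by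
    intro φ n m
    filter_upwards [hae n, hae m] with ω h1 h2
    rw [h1, h2]
  have hCauchy' : ∀ φ : X →L[ℝ] ℝ, ∀ ε : ℝ, 0 < ε → ∃ N : ℕ, ∀ n ≥ N, ∀ m ≥ N,
      eLpNorm (fun ω => φ (f' n ω) - φ (f' m ω)) ⊤ μ01 < ENNReal.ofReal ε := by
    intro φ ε hε
    obtain ⟨N, hN⟩ := hCauchy φ ε hε
    exact ⟨N, fun n hn m hm => by
      rw [← eLpNorm_congr_ae (hcongr φ n m)]; exact hN n hn m hm⟩
  -- good sets from the Lebesgue differentiation lemma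
  have hgood : ∀ nm : ℕ × ℕ, ∃ A : Set ℝ, MeasurableSet A ∧ μ01 Aᶜ = 0 ∧
      ∀ ω ∈ A, ∀ (φ : X →L[ℝ] ℝ) (c : ℝ), 0 ≤ c →
        (∀ᵐ ω' ∂μ01, |φ (f' nm.1 ω' - f' nm.2 ω')| ≤ c) → |φ (f' nm.1 ω - f' nm.2 ω)| ≤ c :=
    fun nm => exists_goodset ((hsm nm.1).sub (hsm nm.2))
  choose A hAmeas hAnull hA using hgood
  set A1 : Set ℝ := ⋂ nm, A nm with hA1_def
  have hA1null : μ01 A1ᶜ = 0 := by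
    rw [hA1_def, compl_iInter]
    exact measure_iUnion_null fun nm => hAnull nm
  have hA1ae : ∀ᵐ ω ∂μ01, ω ∈ A1 := by
    rw [ae_iff]
    exact hA1null
  -- key pointwise bound on the good set
  have key : ∀ ω ∈ A1, ∀ (φ : X →L[ℝ] ℝ) (n m : ℕ) (c : ℝ), 0 ≤ c →
      eLpNorm (fun ω' => φ (f' n ω') - φ (f' m ω')) ⊤ μ01 ≤ ENNReal.ofReal c →
      |φ (f' n ω) - φ (f' m ω)| ≤ c := by
    intro ω hω φ n m c hc hle
    have hb : ∀ᵐ ω' ∂μ01, |φ (f' n ω' - f' m ω')| ≤ c := by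
      filter_upwards [ae_abs_le_of_eLpNorm_top_le hc hle] with ω' h
      rwa [map_sub]
    have := hA (n, m) ω (mem_iInter.1 hω (n, m)) φ c hc hb
    rwa [map_sub] at this
  -- existence of pointwise weak limits on the good set
  have hex : ∀ ω, ω ∈ A1 → ∃ y : X, ∀ φ : X →L[ℝ] ℝ,
      Tendsto (fun n => φ (f' n ω)) atTop (𝓝 (φ y)) := by
    intro ω hω
    apply hWSC
    intro φ
    apply cauchySeq_tendsto_of_complete
    rw [Metric.cauchySeq_iff]
    intro ε hε
    obtain ⟨N, hN⟩ := hCauchy' φ (ε/2) (by linarith)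
    refine ⟨N, fun m hm n hn => ?_⟩
    rw [Real.dist_eq]
    calc |φ (f' m ω) - φ (f' n ω)| ≤ ε/2 :=
          key ω hω φ m n (ε/2) (by linarith) (hN m hm n hn).le
      _ < ε := by linarith
  -- separable closed subspace containing everything
  set S : Set X := ⋃ n, range (f' n) with hS_def
  have hSsep : TopologicalSpace.IsSeparable S :=
    TopologicalSpace.isSeparable_iUnion.2 fun n => (hsm n).isSeparable_range
  set W : Submodule ℝ X := (Submodule.span ℝ S).topologicalClosure with hW_def
  have hWclosure : (W : Set X) = closure ((Submodule.span ℝ S : Submodule ℝ X) : Set X) :=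
    Submodule.topologicalClosure_coe _
  have hWsep : TopologicalSpace.IsSeparable (W : Set X) := by
    rw [hWclosure]
    exact (hSsep.span (R := ℝ)).closure
  obtain ⟨Φ, hΦ1, hΦn⟩ := exists_norming (hSsep.span (R := ℝ))
  have hfW : ∀ n ω, f' n ω ∈ (W : Set X) := by
    intro n ω
    rw [hWclosure]
    exact subset_closure (Submodule.subset_span (mem_iUnion.2 ⟨n, ⟨ω, rfl⟩⟩))
  -- measurable scalar limit functions
  have hφsm : ∀ (j : ℕ) (n : ℕ), StronglyMeasurable (fun ω => Φ j (f' n ω)) :=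
    fun j n => (Φ j).continuous.comp_stronglyMeasurable (hsm n)
  have hexlim : ∀ j : ℕ, ∃ w : ℝ → ℝ, Measurable w ∧
      ∀ᵐ ω ∂μ01, Tendsto (fun n => Φ j (f' n ω)) atTop (𝓝 (w ω)) := by
    intro j
    apply measurable_limit_of_tendsto_metrizable_ae (fun n => (hφsm j n).measurable.aemeasurable)
    filter_upwards [hA1ae] with ω hω
    obtain ⟨y, hy⟩ := hex ω hω
    exact ⟨Φ j y, hy (Φ j)⟩
  choose w hwmeas hwtend using hexlim
  -- master conull measurable set
  have hmaster : ∀ᵐ ω ∂μ01, ω ∈ A1 ∧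
      ∀ j, Tendsto (fun n => Φ j (f' n ω)) atTop (𝓝 (w j ω)) := by
    refine hA1ae.and ?_
    rw [ae_all_iff]
    exact fun j => hwtend j
  obtain ⟨B, hBmeas, hBnull, hB⟩ := exists_conull hmaster
  have hBae : ∀ᵐ ω ∂μ01, ω ∈ B := by
    rw [ae_iff]
    exact hBnull
  -- definition of the limit function g
  set g : ℝ → X := fun ω => if h : ω ∈ B then Classical.choose (hex ω (hB ω h).1) else 0
    with hg_def
  have hg_tend : ∀ ω, ∀ h : ω ∈ B, ∀ φ : X →L[ℝ] ℝ,
      Tendsto (fun n => φ (f' n ω)) atTop (𝓝 (φ (g ω))) := by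
    intro ω h φ
    have : g ω = Classical.choose (hex ω (hB ω h).1) := by
      rw [hg_def]
      simp only [dif_pos h]
    rw [this]
    exact Classical.choose_spec (hex ω (hB ω h).1) φ
  have hgW : ∀ ω, g ω ∈ (W : Set X) := by
    intro ω
    by_cases h : ω ∈ B
    · by_contra hnot
      obtain ⟨ψ, u, hu1, hu2⟩ :=
        geometric_hahn_banach_closed_point (W.convex) (Submodule.isClosed_topologicalClosure (Submodule.span ℝ S)) hnot
      have hψ0 : ∀ z ∈ (W : Set X), ψ z = 0 := by
        intro z hz
        by_contra hzne
        have h1 := hu1 ((u / ψ z) • z) (W.smul_mem _ hz)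
        rw [ContinuousLinearMap.map_smul, smul_eq_mul, div_mul_cancel₀ _ hzne] at h1
        exact lt_irrefl _ h1
      have h0 : Tendsto (fun n => ψ (f' n ω)) atTop (𝓝 (ψ (g ω))) := hg_tend ω h ψ
      have hz : (fun n => ψ (f' n ω)) = fun _ => (0 : ℝ) := by
        funext n
        exact hψ0 _ (hfW n ω)
      rw [hz] at h0
      have hgz : ψ (g ω) = 0 := tendsto_nhds_unique h0 tendsto_const_nhds
      have hzero := hu1 0 W.zero_mem
      rw [map_zero] at hzero
      rw [hgz] at hu2
      linarith
    · have : g ω = 0 := by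
        rw [hg_def]
        simp only [dif_neg h]
      rw [this]
      exact W.zero_mem
  have hwg : ∀ ω, ∀ h : ω ∈ B, ∀ j, Φ j (g ω) = w j ω :=
    fun ω h j => tendsto_nhds_unique (hg_tend ω h (Φ j)) ((hB ω h).2 j)
  -- dense sequence in W
  haveI : TopologicalSpace.SeparableSpace (W : Set X) := hWsep.separableSpace
  haveI : Nonempty (W : Set X) := ⟨⟨0, W.zero_mem⟩⟩
  set t : ℕ → X := fun j => (TopologicalSpace.denseSeq (W : Set X) j : X) with ht_def
  have htW : ∀ j, t j ∈ (W : Set X) := fun j => (TopologicalSpace.denseSeq (W : Set X) j).2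
  have ht_dense : ∀ z ∈ (W : Set X), ∀ ε : ℝ, 0 < ε → ∃ j, ‖z - t j‖ < ε := by
    intro z hz ε hε
    have := Metric.denseRange_iff.1 (TopologicalSpace.denseRange_denseSeq (W : Set X))
      ⟨z, hz⟩ ε hε
    obtain ⟨j, hj⟩ := this
    refine ⟨j, ?_⟩
    rw [Subtype.dist_eq] at hj
    rwa [← dist_eq_norm]
  -- strong measurability of g via Pettis-type argument
  have hgsm : StronglyMeasurable g := by
    letI : MeasurableSpace X := borel X
    haveI : BorelSpace X := ⟨rfl⟩
    rw [stronglyMeasurable_iff_measurable_separable]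
    constructor
    · -- measurability
      apply measurable_of_isOpen
      intro U hU
      set E : ℕ → ℚ → Set ℝ := fun j q =>
        {ω | (⨆ k, (‖w k ω - Φ k (t j)‖₊ : ℝ≥0∞)) < ENNReal.ofReal (q : ℝ)} with hE_def
      have hEmeas : ∀ j q, MeasurableSet (E j q) := by
        intro j q
        have hF : Measurable fun ω => (⨆ k, (‖w k ω - Φ k (t j)‖₊ : ℝ≥0∞)) :=
          Measurable.iSup fun k => ((hwmeas k).sub measurable_const).nnnorm.coe_nnreal_ennreal
        exact hF measurableSet_Iio
      have hEmem : ∀ ω, ω ∈ B → ∀ (j : ℕ) (q : ℚ), 0 < (q : ℝ) →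
          (ω ∈ E j q ↔ ‖g ω - t j‖ < (q : ℝ)) := by
        intro ω hω j q hq
        have hmem : g ω - t j ∈ closure ((Submodule.span ℝ S : Submodule ℝ X) : Set X) := by
          rw [← hWclosure]
          exact W.sub_mem (hgW ω) (htW j)
        have hsup : (‖g ω - t j‖₊ : ℝ≥0∞) = ⨆ k, (‖w k ω - Φ k (t j)‖₊ : ℝ≥0∞) := by
          rw [norming_iSup hΦ1 hΦn hmem]
          congr 1
          funext k
          rw [map_sub, hwg ω hω k]
        have : ω ∈ E j q ↔ (‖g ω - t j‖₊ : ℝ≥0∞) < ENNReal.ofReal (q : ℝ) := by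
          rw [hE_def]
          simp only [mem_setOf_eq]
          rw [hsup]
        rw [this, ← ofReal_norm_eq_coe_nnnorm, ENNReal.ofReal_lt_ofReal_iff hq]
      -- decomposition of the preimage
      have hdecomp : g ⁻¹' U =
          (B ∩ ⋃ j, ⋃ q : ℚ, if 0 < (q : ℝ) ∧ Metric.ball (t j) (q : ℝ) ⊆ U then E j q else ∅)
          ∪ (Bᶜ ∩ (if (0 : X) ∈ U then univ else ∅)) := by
        ext ω
        by_cases hω : ω ∈ B
        · constructor
          · intro hgU
            rw [mem_preimage] at hgU
            obtain ⟨ε, hε, hball⟩ := Metric.isOpen_iff.1 hU (g ω) hgU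
            obtain ⟨j, hj⟩ := ht_dense (g ω) (hgW ω) (ε/3) (by linarith)
            obtain ⟨q, hq1, hq2⟩ := exists_rat_btwn (lt_of_lt_of_le hj (by linarith : ε/3 ≤ ε/2))
            have hq0 : 0 < (q : ℝ) := lt_of_le_of_lt (norm_nonneg _) hq1
            have hsub : Metric.ball (t j) (q : ℝ) ⊆ U := by
              intro y hy
              apply hball
              rw [Metric.mem_ball] at hy ⊢
              calc dist y (g ω) ≤ dist y (t j) + dist (t j) (g ω) := dist_triangle _ _ _
                _ < (q : ℝ) + (q : ℝ) := by
                    apply add_lt_add hy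
                    rw [dist_comm, dist_eq_norm]
                    exact hq1
                _ < ε := by linarith
            refine Or.inl ⟨hω, ?_⟩
            simp only [mem_iUnion]
            refine ⟨j, q, ?_⟩
            rw [if_pos ⟨hq0, hsub⟩]
            exact (hEmem ω hω j q hq0).2 hq1
          · rintro (⟨-, hmem⟩ | ⟨hωc, -⟩)
            · simp only [mem_iUnion] at hmem
              obtain ⟨j, q, hq⟩ := hmem
              by_cases hcond : 0 < (q : ℝ) ∧ Metric.ball (t j) (q : ℝ) ⊆ U
              · rw [if_pos hcond] at hq
                rw [mem_preimage]
                apply hcond.2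
                rw [Metric.mem_ball, dist_eq_norm]
                exact (hEmem ω hω j q hcond.1).1 hq
              · rw [if_neg hcond] at hq
                exact absurd hq (notMem_empty ω)
            · exact absurd hω hωc
        · have hg0 : g ω = 0 := by
            rw [hg_def]
            simp only [dif_neg hω]
          constructor
          · intro hgU
            rw [mem_preimage, hg0] at hgU
            refine Or.inr ⟨hω, ?_⟩
            rw [if_pos hgU]
            exact mem_univ ω
          · rintro (⟨hωB, -⟩ | ⟨-, hmem⟩)
            · exact absurd hωB hω
            · by_cases h0U : (0 : X) ∈ U
              · rw [mem_preimage, hg0]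
                exact h0U
              · rw [if_neg h0U] at hmem
                exact absurd hmem (notMem_empty ω)
      rw [hdecomp]
      refine MeasurableSet.union (hBmeas.inter ?_) (hBmeas.compl.inter ?_)
      · refine MeasurableSet.iUnion fun j => MeasurableSet.iUnion fun q => ?_
        split_ifs
        · exact hEmeas j q
        · exact MeasurableSet.empty
      · split_ifs
        · exact MeasurableSet.univ
        · exact MeasurableSet.empty
    · exact hWsep.mono (range_subset_iff.2 hgW)
  -- conclusion
  refine ⟨g, hgsm.aestronglyMeasurable, ?_⟩
  intro φ
  rw [ENNReal.tendsto_nhds_zero]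
  intro ε hε
  obtain ⟨r, hr, hrle⟩ := exists_ofReal_le hε
  obtain ⟨N, hN⟩ := hCauchy' φ r hr
  filter_upwards [eventually_ge_atTop N] with n hn
  have hb : ∀ᵐ ω ∂μ01, |φ (f n ω) - φ (g ω)| ≤ r := by
    filter_upwards [hBae, hae n] with ω hωB hωf
    rw [hωf]
    have htend : Tendsto (fun m => |φ (f' n ω) - φ (f' m ω)|) atTop
        (𝓝 |φ (f' n ω) - φ (g ω)|) := ((hg_tend ω hωB φ).const_sub _).abs
    refine le_of_tendsto htend ?_
    filter_upwards [eventually_ge_atTop N] with m hm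
    exact key ω (hB ω hωB).1 φ n m r hr.le (hN n hn m hm).le
  calc eLpNorm (fun ω => φ (f n ω) - φ (g ω)) ⊤ μ01 ≤ ENNReal.ofReal r :=
        eLpNorm_top_le_of_ae_abs_le hb
    _ ≤ ε := hrle


end NormedX

end Stmt17Aux

theorem stmt_17 {X : Type*} [NormedAddCommGroup X] [NormedSpace ℝ X] [CompleteSpace X] :
    (∀ x : ℕ → X,
      (∀ φ : X →L[ℝ] ℝ, ∃ L : ℝ, Tendsto (fun n => φ (x n)) atTop (𝓝 L)) →
      ∃ y : X, ∀ φ : X →L[ℝ] ℝ, Tendsto (fun n => φ (x n)) atTop (𝓝 (φ y))) ↔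
    (∀ f : ℕ → ℝ → X, (∀ n, AEStronglyMeasurable (f n) μ01) →
      (∀ φ : X →L[ℝ] ℝ, ∀ ε : ℝ, 0 < ε → ∃ N : ℕ, ∀ n ≥ N, ∀ m ≥ N,
        eLpNorm (fun ω => φ (f n ω) - φ (f m ω)) ⊤ μ01 < ENNReal.ofReal ε) →
      ∃ g : ℝ → X, AEStronglyMeasurable g μ01 ∧ ScalarInLp ⊤ f g) := by
  constructor
  · intro h f hm hc
    exact Stmt17Aux.dir1 h f hm hc
  · intro h x hx
    exact Stmt17Aux.dir2 h x hx
end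
end

section
/- Let X be a reflexive real Banach space (i.e., the canonical embedding of X into its double dual X** is surjective). Then every sequence (f_n) in L₀(X) that is pointwise bounded a.e. (sup_n ‖f_n(ω)‖ < ∞ for μ-a.e. ω) and scalarly Cauchy in measure converges scalarly in measure to some f ∈ L₀(X). -/
open MeasureTheory Filter Topology ENNReal Set

noncomputable section

theorem key_weak_limit {X : Type*} [NormedAddCommGroup X] [NormedSpace ℝ X]
    (hrefl : Function.Surjective (NormedSpace.inclusionInDoubleDual ℝ X))
    (Y : Submodule ℝ X) (hYc : IsClosed (Y : Set X))
    (D : ℕ → X →L[ℝ] ℝ) (hsep : ∀ y ∈ Y, (∀ m, D m y = 0) → y = 0)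
    (x : ℕ → X) (hxY : ∀ j, x j ∈ Y) (M : ℝ) (hM : ∀ j, ‖x j‖ ≤ M)
    (hconv : ∀ m, ∃ c : ℝ, Tendsto (fun j => D m (x j)) atTop (𝓝 c)) :
    ∃ z, z ∈ Y ∧ ∀ φ : X →L[ℝ] ℝ, Tendsto (fun j => φ (x j)) atTop (𝓝 (φ z)) := by
  classical
  -- limits along ultrafilters
  have hlim : ∀ (U : Ultrafilter ℕ) (φ : X →L[ℝ] ℝ), ∃ c : ℝ,
      Tendsto (fun j => φ (x j)) (U : Filter ℕ) (𝓝 c) ∧ |c| ≤ ‖φ‖ * M := by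
    intro U φ
    have hmem : ∀ j, φ (x j) ∈ Icc (-(‖φ‖ * M)) (‖φ‖ * M) := by
      intro j
      have h1 : |φ (x j)| ≤ ‖φ‖ * M := by
        calc |φ (x j)| = ‖φ (x j)‖ := rfl
        _ ≤ ‖φ‖ * ‖x j‖ := φ.le_opNorm _
        _ ≤ ‖φ‖ * M := by
            exact mul_le_mul_of_nonneg_left (hM j) (norm_nonneg _)
      exact abs_le.mp h1
    have hle : (U.map fun j => φ (x j) : Filter ℝ) ≤ 𝓟 (Icc (-(‖φ‖ * M)) (‖φ‖ * M)) := by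
      refine le_principal_iff.mpr ?_
      exact Filter.mem_map.mpr (by filter_upwards with j using hmem j)
    obtain ⟨c, hcmem, hc⟩ := (isCompact_Icc (a := -(‖φ‖ * M)) (b := ‖φ‖ * M)).ultrafilter_le_nhds
      (U.map fun j => φ (x j)) hle
    exact ⟨c, hc, abs_le.mpr hcmem⟩
  -- for each ultrafilter below atTop, produce the weak limit
  have hz : ∀ U : Ultrafilter ℕ, (U : Filter ℕ) ≤ atTop →
      ∃ z, z ∈ Y ∧ ∀ φ : X →L[ℝ] ℝ, Tendsto (fun j => φ (x j)) (U : Filter ℕ) (𝓝 (φ z)) := by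
    intro U hU
    choose c hct hcb using hlim U
    have hadd : ∀ φ ψ : X →L[ℝ] ℝ, c (φ + ψ) = c φ + c ψ := by
      intro φ ψ
      refine tendsto_nhds_unique (hct (φ + ψ)) ?_
      have := (hct φ).add (hct ψ)
      simpa using this
    have hsmul : ∀ (a : ℝ) (φ : X →L[ℝ] ℝ), c (a • φ) = a * c φ := by
      intro a φ
      refine tendsto_nhds_unique (hct (a • φ)) ?_
      have := (hct φ).const_mul a
      simpa using this
    let F : (X →L[ℝ] ℝ) →ₗ[ℝ] ℝ :=
      { toFun := c, map_add' := hadd, map_smul' := hsmul }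
    let F' : StrongDual ℝ X →L[ℝ] ℝ :=
      F.mkContinuous M (fun φ => by
        simpa [F, Real.norm_eq_abs, mul_comm] using hcb φ)
    obtain ⟨z, hzF⟩ := hrefl F'
    have hφz : ∀ φ : X →L[ℝ] ℝ, φ z = c φ := by
      intro φ
      have := DFunLike.congr_fun hzF φ
      simpa [NormedSpace.dual_def, F', F] using this
    have hzY : z ∈ Y := by
      by_contra hzn
      obtain ⟨ψ, u, hYlt, hux⟩ := geometric_hahn_banach_closed_point Y.convex hYc hzn
      have hψY : ∀ y ∈ Y, ψ y = 0 := by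
        intro y hy
        by_contra hne
        have hscale : ∀ t : ℝ, t * ψ y < u := by
          intro t
          have := hYlt (t • y) (Y.smul_mem t hy)
          simpa using this
        have := hscale ((u + 1) / ψ y)
        rw [div_mul_cancel₀ _ hne] at this
        linarith
      have hu0 : 0 < u := by simpa using hYlt 0 Y.zero_mem
      have hψ0 : c ψ = 0 := by
        refine tendsto_nhds_unique (hct ψ) ?_
        have : (fun j => ψ (x j)) = fun _ => (0 : ℝ) := by
          funext j; exact hψY _ (hxY j)
        rw [this]; exact tendsto_const_nhds
      have : ψ z = 0 := (hφz ψ).trans hψ0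
      linarith [hux, hu0, this]
    exact ⟨z, hzY, fun φ => by rw [hφz φ]; exact hct φ⟩
  -- uniqueness of the weak limit
  obtain ⟨z, hzY, hzt⟩ := hz (Ultrafilter.of atTop) (Ultrafilter.of_le _)
  refine ⟨z, hzY, ?_⟩
  have huniq : ∀ U : Ultrafilter ℕ, (U : Filter ℕ) ≤ atTop →
      ∀ zU, zU ∈ Y → (∀ φ : X →L[ℝ] ℝ, Tendsto (fun j => φ (x j)) (U : Filter ℕ) (𝓝 (φ zU))) →
      zU = z := by
    intro U hU zU hzUY hzUt
    have hDm : ∀ m, D m zU = D m z := by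
      intro m
      obtain ⟨cm, hcm⟩ := hconv m
      have h1 : D m zU = cm :=
        tendsto_nhds_unique (hzUt (D m)) (hcm.mono_left hU)
      have h2 : D m z = cm :=
        tendsto_nhds_unique (hzt (D m)) (hcm.mono_left (Ultrafilter.of_le _))
      rw [h1, h2]
    have : zU - z = 0 := by
      refine hsep _ (Y.sub_mem hzUY hzY) fun m => ?_
      rw [map_sub, hDm m, sub_self]
    exact sub_eq_zero.mp this
  intro φ
  rw [tendsto_iff_ultrafilter]
  intro U hU
  obtain ⟨zU, hzUY, hzUt⟩ := hz U hU
  rw [← huniq U hU zU hzUY hzUt]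
  exact hzUt φ

theorem stmt_18 {X : Type*} [NormedAddCommGroup X] [NormedSpace ℝ X] [CompleteSpace X]
    (hrefl : Function.Surjective (NormedSpace.inclusionInDoubleDual ℝ X))
    (f : ℕ → ℝ → X) (hf : ∀ n, AEStronglyMeasurable (f n) μ01)
    (hbdd : PtwiseBddAE f) (hc : ScalarCauchyInMeasure f) :
    ∃ g : ℝ → X, AEStronglyMeasurable g μ01 ∧ ScalarInMeasure f g := by
  classical
  borelize X
  haveI : IsFiniteMeasure μ01 :=
    ⟨by rw [μ01, Measure.restrict_apply_univ, Real.volume_Icc]; norm_num⟩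
  -- strongly measurable versions
  set f' : ℕ → ℝ → X := fun n => (hf n).mk (f n) with hf'def
  have hf'm : ∀ n, StronglyMeasurable (f' n) := fun n => (hf n).stronglyMeasurable_mk
  have hff' : ∀ n, f n =ᵐ[μ01] f' n := fun n => (hf n).ae_eq_mk
  -- separable closed subspace containing all values
  have ht : TopologicalSpace.IsSeparable (⋃ n, range (f' n)) :=
    .iUnion fun n => (hf'm n).isSeparable_range
  set Y : Submodule ℝ X := (Submodule.span ℝ (⋃ n, range (f' n))).topologicalClosure with hYdef
  have hYsep : TopologicalSpace.IsSeparable (Y : Set X) := ht.span.closure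
  have hYc : IsClosed (Y : Set X) := Submodule.isClosed_topologicalClosure _
  have hmemY : ∀ n ω, f' n ω ∈ Y := fun n ω =>
    Submodule.le_topologicalClosure _
      (Submodule.subset_span (mem_iUnion.mpr ⟨n, mem_range_self ω⟩))
  -- dense sequence in Y
  haveI : TopologicalSpace.SeparableSpace (Y : Set X) := hYsep.separableSpace
  haveI : Nonempty (Y : Set X) := ⟨⟨0, Y.zero_mem⟩⟩
  set u : ℕ → X := fun m => (TopologicalSpace.denseSeq (Y : Set X) m : X) with hudef
  have huY : ∀ m, u m ∈ Y := fun m => (TopologicalSpace.denseSeq (Y : Set X) m).2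
  have hudense : ∀ y ∈ Y, ∀ ε : ℝ, 0 < ε → ∃ m, ‖y - u m‖ < ε := by
    intro y hy ε hε
    obtain ⟨m, hm⟩ :=
      (TopologicalSpace.denseRange_denseSeq (Y : Set X)).exists_dist_lt ⟨y, hy⟩ hε
    refine ⟨m, ?_⟩
    rw [← dist_eq_norm]
    simpa [Subtype.dist_eq, hudef] using hm
  -- norming functionals
  choose D hD1 hD2 using fun m => exists_dual_vector'' ℝ (u m)
  have hDle : ∀ (m : ℕ) (y : X), D m y ≤ ‖y‖ := by
    intro m y
    calc D m y ≤ |D m y| := le_abs_self _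
      _ = ‖D m y‖ := rfl
      _ ≤ ‖D m‖ * ‖y‖ := (D m).le_opNorm y
      _ ≤ 1 * ‖y‖ := mul_le_mul_of_nonneg_right (hD1 m) (norm_nonneg y)
      _ = ‖y‖ := one_mul _
  have hDapprox : ∀ y ∈ Y, ∀ ε : ℝ, 0 < ε → ∃ m, ‖y‖ - ε ≤ D m y ∧ ‖y - u m‖ < ε := by
    intro y hy ε hε
    obtain ⟨m, hm⟩ := hudense y hy (ε / 2) (by linarith)
    refine ⟨m, ?_, lt_of_lt_of_le hm (by linarith)⟩
    have h1 : D m y = ‖u m‖ + D m (y - u m) := by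
      rw [map_sub, hD2 m]; simp
    have h2 : |D m (y - u m)| ≤ ‖y - u m‖ := by
      calc |D m (y - u m)| = ‖D m (y - u m)‖ := rfl
        _ ≤ ‖D m‖ * ‖y - u m‖ := (D m).le_opNorm _
        _ ≤ 1 * ‖y - u m‖ := mul_le_mul_of_nonneg_right (hD1 m) (norm_nonneg _)
        _ = ‖y - u m‖ := one_mul _
    have h3 : |‖u m‖ - ‖y‖| ≤ ‖y - u m‖ := by
      rw [norm_sub_rev y (u m)]; exact abs_norm_sub_norm_le _ _
    rw [h1]
    have := abs_le.mp h2
    have := abs_le.mp h3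
    linarith
  have hDnorm : ∀ y ∈ Y, ‖y‖ = ⨆ m, D m y := by
    intro y hy
    have hbdd' : BddAbove (range fun m => D m y) := by
      refine ⟨‖y‖, ?_⟩
      rintro _ ⟨m, rfl⟩
      exact hDle m y
    refine le_antisymm ?_ (ciSup_le fun m => hDle m y)
    refine le_of_forall_pos_le_add ?_
    intro ε hε
    obtain ⟨m, hm, _⟩ := hDapprox y hy ε hε
    calc ‖y‖ ≤ D m y + ε := by linarith
      _ ≤ (⨆ m, D m y) + ε := by gcongr; exact le_ciSup hbdd' m
  have hsep : ∀ y ∈ Y, (∀ m, D m y = 0) → y = 0 := by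
    intro y hy h0
    have : ‖y‖ = 0 := by
      rw [hDnorm y hy]
      simp [h0]
    exact norm_eq_zero.mp this
  -- choose Cauchy indices
  have hcN : ∀ m j : ℕ, ∃ N : ℕ, ∀ n ≥ N, ∀ n' ≥ N,
      μ01 {ω | (1/2 : ℝ)^j ≤ |D m (f' n ω) - D m (f' n' ω)|} < ENNReal.ofReal ((1/2)^j) := by
    intro m j
    obtain ⟨N, hN⟩ := hc (D m) ((1/2)^j) (by positivity)
    refine ⟨N, fun n hn n' hn' => ?_⟩
    have hset : {ω | (1/2 : ℝ)^j ≤ |D m (f' n ω) - D m (f' n' ω)|}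
        =ᵐ[μ01] {ω | (1/2 : ℝ)^j ≤ |D m (f n ω) - D m (f n' ω)|} := by
      filter_upwards [hff' n, hff' n'] with ω h1 h2
      show ((1/2 : ℝ)^j ≤ |D m (f' n ω) - D m (f' n' ω)|)
          = ((1/2 : ℝ)^j ≤ |D m (f n ω) - D m (f n' ω)|)
      rw [h1, h2]
    rw [measure_congr hset]
    exact hN n hn n' hn'
  choose N hN using hcN
  -- the subsequence
  let nn : ℕ → ℕ := fun j => Nat.rec ((Finset.range 1).sup fun m => N m 0)
      (fun j ih => max (ih + 1) ((Finset.range (j + 2)).sup fun m => N m (j + 1))) j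
  have hnn_succ : ∀ j, nn j < nn (j + 1) := fun j =>
    lt_of_lt_of_le (Nat.lt_succ_self _) (le_max_left _ _)
  have hnnmono : StrictMono nn := strictMono_nat_of_lt_succ hnn_succ
  have hnnN : ∀ m j, m ≤ j → N m j ≤ nn j := by
    intro m j hmj
    cases j with
    | zero =>
        exact Finset.le_sup (f := fun m => N m 0) (Finset.mem_range.mpr (by omega))
    | succ j =>
        exact le_trans
          (Finset.le_sup (f := fun m => N m (j + 1)) (Finset.mem_range.mpr (by omega)))
          (le_max_right _ _)
  -- Borel-Cantelli
  let S : ℕ → ℕ → Set ℝ := fun m j =>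
    {ω | (1/2 : ℝ)^j ≤ |D m (f' (nn (j + 1)) ω) - D m (f' (nn j) ω)|}
  have hSmeas : ∀ m j, MeasurableSet (S m j) := by
    intro m j
    apply measurableSet_le measurable_const
    exact (((D m).continuous.measurable.comp (hf'm _).measurable).sub
      ((D m).continuous.measurable.comp (hf'm _).measurable)).abs
  have hSbound : ∀ m j, m ≤ j → μ01 (S m j) ≤ ENNReal.ofReal ((1/2)^j) := by
    intro m j hmj
    exact (hN m j (nn (j + 1)) (le_trans (hnnN m j hmj) (hnn_succ j).le)
      (nn j) (hnnN m j hmj)).le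
  have hμ1 : μ01 univ = 1 := by
    rw [μ01, Measure.restrict_apply_univ, Real.volume_Icc]; norm_num
  have hSsum : ∀ m, ∑' j, μ01 (S m j) ≠ ∞ := by
    intro m
    have h1 : ∀ j, μ01 (S m j) ≤ ENNReal.ofReal (2^m) * (ENNReal.ofReal (1/2))^j := by
      intro j
      rw [← ENNReal.ofReal_pow (by norm_num), ← ENNReal.ofReal_mul (by positivity)]
      rcases le_or_gt m j with h | h
      · calc μ01 (S m j) ≤ ENNReal.ofReal ((1/2)^j) := hSbound m j h
          _ ≤ ENNReal.ofReal (2^m * (1/2)^j) := by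
              apply ENNReal.ofReal_le_ofReal
              nlinarith [pow_pos (by norm_num : (0:ℝ) < 1/2) j, pow_le_pow_right₀
                (by norm_num : (1:ℝ) ≤ 2) (Nat.zero_le m)]
      · calc μ01 (S m j) ≤ μ01 univ := measure_mono (subset_univ _)
          _ = 1 := hμ1
          _ ≤ ENNReal.ofReal (2^m * (1/2)^j) := by
              rw [← ENNReal.ofReal_one]
              apply ENNReal.ofReal_le_ofReal
              have h2 : (2:ℝ)^j ≤ 2^m := pow_le_pow_right₀ (by norm_num) h.le
              have h3 : (0:ℝ) < 2^j := by positivity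
              rw [one_div, inv_pow, ← div_eq_mul_inv, le_div_iff₀ h3]
              linarith
    have h2 : ∑' j, μ01 (S m j) ≤ ENNReal.ofReal (2^m) * ∑' j : ℕ, (ENNReal.ofReal (1/2))^j := by
      rw [← ENNReal.tsum_mul_left]
      exact ENNReal.tsum_le_tsum h1
    refine ne_top_of_le_ne_top ?_ h2
    apply ENNReal.mul_ne_top ENNReal.ofReal_ne_top
    rw [ENNReal.tsum_geometric]
    apply ENNReal.inv_ne_top.mpr
    intro h0
    have h1' : (1 : ℝ≥0∞) ≤ ENNReal.ofReal (1/2) := tsub_eq_zero_iff_le.mp h0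
    have h2' : ENNReal.ofReal (1/2) < 1 := ENNReal.ofReal_lt_one.mpr (by norm_num)
    exact absurd h1' (not_le.mpr h2')
  have hBC : ∀ m, μ01 (limsup (S m) atTop) = 0 := fun m =>
    measure_limsup_atTop_eq_zero (hSsum m)
  -- the good measurable set
  let G : Set ℝ := {ω | ∃ K : ℕ, ∀ n, ‖f' n ω‖ ≤ (K : ℝ)} ∩ ⋂ m, (limsup (S m) atTop)ᶜ
  have hGmeas : MeasurableSet G := by
    apply MeasurableSet.inter
    · have heq : {ω : ℝ | ∃ K : ℕ, ∀ n, ‖f' n ω‖ ≤ (K : ℝ)}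
          = ⋃ K : ℕ, ⋂ n, {ω | ‖f' n ω‖ ≤ (K : ℝ)} := by
        ext ω; simp only [mem_iUnion, mem_iInter, mem_setOf_eq]
      rw [heq]
      exact MeasurableSet.iUnion fun K => MeasurableSet.iInter fun n =>
        measurableSet_le (hf'm n).measurable.norm measurable_const
    · exact MeasurableSet.iInter fun m => (MeasurableSet.measurableSet_limsup fun j => hSmeas m j).compl
  have hGae : ∀ᵐ ω ∂μ01, ω ∈ G := by
    have hae1 : ∀ᵐ ω ∂μ01, ∀ m, ω ∉ limsup (S m) atTop := by
      rw [ae_all_iff]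
      intro m
      rw [ae_iff]
      simpa using hBC m
    have hae2 : ∀ᵐ ω ∂μ01, ∃ K : ℕ, ∀ n, ‖f' n ω‖ ≤ (K : ℝ) := by
      filter_upwards [hbdd, ae_all_iff.mpr hff'] with ω h1 h2
      obtain ⟨b, hb⟩ := h1
      refine ⟨⌈b⌉₊, fun n => ?_⟩
      have h3 : ‖f n ω‖ ≤ b := hb (mem_range_self n)
      rw [← h2 n]
      exact le_trans h3 (Nat.le_ceil b)
    filter_upwards [hae1, hae2] with ω h1 h2
    exact ⟨h2, mem_iInter.mpr fun m => h1 m⟩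
  -- convergence of the norming functionals along the subsequence, on G
  have hGconv : ∀ ω ∈ G, ∀ m, ∃ c : ℝ,
      Tendsto (fun j => D m (f' (nn j) ω)) atTop (𝓝 c) := by
    intro ω hω m
    have hnot : ω ∉ limsup (S m) atTop := mem_iInter.mp hω.2 m
    have hev : ∀ᶠ j in atTop, ω ∉ S m j := by
      rw [Filter.mem_limsup_iff_frequently_mem] at hnot
      exact not_frequently.mp hnot
    obtain ⟨j0, hj0⟩ := eventually_atTop.mp hev
    have hsum : Summable fun j => dist (D m (f' (nn j) ω)) (D m (f' (nn (j + 1)) ω)) := by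
      rw [← summable_nat_add_iff j0]
      have hgeo : Summable fun j : ℕ => (1/2 : ℝ)^j0 * (1/2)^j :=
        (summable_geometric_of_lt_one (by norm_num) (by norm_num)).mul_left _
      refine Summable.of_nonneg_of_le (fun j => dist_nonneg) (fun j => ?_) hgeo
      have hj := hj0 (j + j0) (by omega)
      simp only [S, mem_setOf_eq, not_le] at hj
      rw [Real.dist_eq, abs_sub_comm]
      calc |D m (f' (nn (j + j0 + 1)) ω) - D m (f' (nn (j + j0)) ω)| ≤ (1/2 : ℝ)^(j + j0) :=
            hj.le
        _ = (1/2 : ℝ)^j0 * (1/2)^j := by rw [pow_add]; ring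
    exact cauchySeq_tendsto_of_complete (cauchySeq_of_summable_dist hsum)
  -- weak limits
  have hQ : ∀ ω, ω ∈ G → ∃ z, z ∈ Y ∧ ∀ φ : X →L[ℝ] ℝ,
      Tendsto (fun j => φ (f' (nn j) ω)) atTop (𝓝 (φ z)) := by
    intro ω hω
    obtain ⟨K, hK⟩ := hω.1
    exact key_weak_limit hrefl Y hYc D hsep (fun j => f' (nn j) ω)
      (fun j => hmemY _ ω) K (fun j => hK _) (hGconv ω hω)
  set g : ℝ → X := fun ω => if h : ω ∈ G then (hQ ω h).choose else 0 with hgdef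
  have hgY : ∀ ω, g ω ∈ Y := by
    intro ω
    by_cases h : ω ∈ G
    · rw [hgdef]; simp only [dif_pos h]; exact (hQ ω h).choose_spec.1
    · rw [hgdef]; simp only [dif_neg h]; exact Y.zero_mem
  have hgt : ∀ ω ∈ G, ∀ φ : X →L[ℝ] ℝ,
      Tendsto (fun j => φ (f' (nn j) ω)) atTop (𝓝 (φ (g ω))) := by
    intro ω hω φ
    rw [hgdef]
    simp only [dif_pos hω]
    exact (hQ ω hω).choose_spec.2 φ
  -- measurability of g
  have hφg : ∀ φ : X →L[ℝ] ℝ, Measurable fun ω => φ (g ω) := by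
    intro φ
    apply measurable_of_tendsto_metrizable
      (f := fun j ω => if ω ∈ G then φ (f' (nn j) ω) else 0)
    · intro j
      exact Measurable.ite hGmeas
        (φ.continuous.measurable.comp (hf'm _).measurable) measurable_const
    · rw [tendsto_pi_nhds]
      intro ω
      by_cases h : ω ∈ G
      · simp only [if_pos h]
        exact hgt ω h φ
      · simp only [if_neg h]
        have : φ (g ω) = 0 := by rw [hgdef]; simp [dif_neg h]
        rw [this]
        exact tendsto_const_nhds
  have hnormg : ∀ c : X, c ∈ Y → Measurable fun ω => ‖g ω - c‖ := by
    intro c hc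
    have heq : (fun ω => ‖g ω - c‖) = fun ω => ⨆ m, (D m (g ω) - D m c) := by
      funext ω
      rw [hDnorm _ (Y.sub_mem (hgY ω) hc)]
      congr 1
      funext m
      rw [map_sub]
    rw [heq]
    exact Measurable.iSup fun m => (hφg (D m)).sub measurable_const
  have hgmeas : Measurable g := by
    have hex : ∀ (ω : ℝ) (k : ℕ), ∃ m, ‖g ω - u m‖ < 1/(k + 1) :=
      fun ω k => hudense _ (hgY ω) _ (by positivity)
    have hsm : ∀ k, Measurable fun ω => u (Nat.find (hex ω k)) := by
      intro k
      exact (measurable_from_nat (f := u)).comp (measurable_find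
        (p := fun ω mm => ‖g ω - u mm‖ < 1/(k + 1)) (fun ω => hex ω k)
        (fun mm => measurableSet_lt (hnormg (u mm) (huY mm)) measurable_const))
    apply measurable_of_tendsto_metrizable hsm
    rw [tendsto_pi_nhds]
    intro ω
    rw [tendsto_iff_dist_tendsto_zero]
    apply squeeze_zero (fun k => dist_nonneg) (fun k => ?_)
      tendsto_one_div_add_atTop_nhds_zero_nat
    rw [dist_comm, dist_eq_norm]
    exact (Nat.find_spec (hex ω k)).le
  have hgsm : AEStronglyMeasurable g μ01 := by
    refine (stronglyMeasurable_iff_measurable_separable.mpr ⟨hgmeas, ?_⟩).aestronglyMeasurable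
    exact hYsep.mono (range_subset_iff.mpr hgY)
  -- conclusion
  refine ⟨g, hgsm, ?_⟩
  intro φ
  have htimsub : TendstoInMeasure μ01 (fun j ω => φ (f' (nn j) ω)) atTop fun ω => φ (g ω) := by
    apply tendstoInMeasure_of_tendsto_ae
    · exact fun j => (φ.continuous.measurable.comp (hf'm _).measurable).aestronglyMeasurable
    · filter_upwards [hGae] with ω hω using hgt ω hω φ
  rw [tendstoInMeasure_iff_dist]
  intro ε hε
  rw [ENNReal.tendsto_atTop_zero]
  intro δ hδ
  obtain ⟨r, hr0, hrδ⟩ : ∃ r : ℝ, 0 < r ∧ ENNReal.ofReal r ≤ δ / 2 := by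
    rcases eq_or_ne (δ / 2) ⊤ with h | h
    · exact ⟨1, one_pos, by simp [h]⟩
    · refine ⟨(δ / 2).toReal, ENNReal.toReal_pos ?_ h, by rw [ENNReal.ofReal_toReal h]⟩
      simp only [ne_eq, ENNReal.div_eq_zero_iff]
      push_neg
      exact ⟨hδ.ne', by norm_num⟩
  set ε₁ := min (ε / 2) r with hε₁
  have hε₁0 : 0 < ε₁ := lt_min (by linarith) hr0
  obtain ⟨N₁, hN₁⟩ := hc φ ε₁ hε₁0
  have h3 : ∀ᶠ j in atTop,
      μ01 {x | ε / 2 ≤ dist (φ (f' (nn j) x)) (φ (g x))} ≤ δ / 2 := by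
    have h2 := tendstoInMeasure_iff_dist.mp htimsub (ε / 2) (by linarith)
    exact h2.eventually_le_const (ENNReal.div_pos hδ.ne' (by norm_num))
  obtain ⟨J, hJ1, hJ2⟩ := (h3.and (eventually_ge_atTop N₁)).exists
  refine ⟨N₁, fun n hn => ?_⟩
  have hnnJ : N₁ ≤ nn J := le_trans hJ2 hnnmono.le_apply
  have hBμ : μ01 {x | ε₁ ≤ |φ (f n x) - φ (f (nn J) x)|} ≤ δ / 2 :=
    le_trans (hN₁ n hn (nn J) hnnJ).le
      (le_trans (ENNReal.ofReal_le_ofReal (min_le_right _ _)) hrδ)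
  have hsub : {x | ε ≤ dist (φ (f n x)) (φ (g x))} ≤ᵐ[μ01]
      ({x | ε₁ ≤ |φ (f n x) - φ (f (nn J) x)|} ∪
      {x | ε / 2 ≤ dist (φ (f' (nn J) x)) (φ (g x))} : Set ℝ) := by
    filter_upwards [hff' (nn J)] with x hx
    intro hmem
    have hmem' : ε ≤ |φ (f n x) - φ (g x)| := by
      have h0 : ε ≤ dist (φ (f n x)) (φ (g x)) := hmem
      rwa [Real.dist_eq] at h0
    show x ∈ {x | ε₁ ≤ |φ (f n x) - φ (f (nn J) x)|} ∪
      {x | ε / 2 ≤ dist (φ (f' (nn J) x)) (φ (g x))}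
    by_cases hcase : ε / 2 ≤ |φ (f' (nn J) x) - φ (g x)|
    · right
      rw [mem_setOf_eq, Real.dist_eq]
      exact hcase
    · left
      rw [mem_setOf_eq]
      push_neg at hcase
      have htri : |φ (f n x) - φ (g x)| ≤
          |φ (f n x) - φ (f (nn J) x)| + |φ (f' (nn J) x) - φ (g x)| := by
        rw [hx]
        exact abs_sub_le _ _ _
      have : ε / 2 ≤ |φ (f n x) - φ (f (nn J) x)| := by linarith
      exact le_trans (min_le_left _ _) this
  calc μ01 {x | ε ≤ dist (φ (f n x)) (φ (g x))}
      ≤ μ01 ({x | ε₁ ≤ |φ (f n x) - φ (f (nn J) x)|} ∪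
        {x | ε / 2 ≤ dist (φ (f' (nn J) x)) (φ (g x))}) := measure_mono_ae hsub
    _ ≤ μ01 {x | ε₁ ≤ |φ (f n x) - φ (f (nn J) x)|} +
        μ01 {x | ε / 2 ≤ dist (φ (f' (nn J) x)) (φ (g x))} := measure_union_le _ _
    _ ≤ δ / 2 + δ / 2 := add_le_add hBμ hJ1
    _ = δ := ENNReal.add_halves δ
end
end
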